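/- Let X and Y be real Banach spaces, let ε ≥ 0, and let f : X → Y be a standard ε-isometry. Then for every bounded linear functional x* ∈ X* there exists φ ∈ Y* with ‖φ‖ = ‖x*‖ such that |⟨φ, f(x)⟩ − ⟨x*, x⟩| ≤ 4ε‖x*‖ for all x ∈ X. -/

import Mathlib

open scoped ENNReal ZeroAtInfty

noncomputable section

/-- `f : X → Y` is a *standard ε-isometry*: `f 0 = 0` and
`|‖f x - f y‖ - ‖x - y‖| ≤ ε` for all `x, y`. -/
def StdEpsIsom {X Y : Type*} [NormedAddCommGroup X] [NormedAddCommGroup Y]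
    (ε : ℝ) (f : X → Y) : Prop :=
  f 0 = 0 ∧ ∀ x y : X, |‖f x - f y‖ - ‖x - y‖| ≤ ε

/-- `L(f)`: the closed linear span of the range of `f` in `Y`. -/
def Lf {X Y : Type*} [NormedAddCommGroup Y] [NormedSpace ℝ Y] (f : X → Y) :
    Submodule ℝ Y :=
  (Submodule.span ℝ (Set.range f)).topologicalClosure

theorem mem_Lf {X Y : Type*} [NormedAddCommGroup Y] [NormedSpace ℝ Y] (f : X → Y) (x : X) :
    f x ∈ Lf f :=
  Submodule.le_topologicalClosure _ (Submodule.subset_span ⟨x, rfl⟩)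

/-- A standard ε-isometry `f` is *stable* if for some `α, γ > 0` there is a bounded linear
operator `T : L(f) → X` with `‖T‖ ≤ α` such that `‖T (f x) - x‖ ≤ γ ε` for all `x`. -/
def IsStable {X Y : Type*} [NormedAddCommGroup X] [NormedSpace ℝ X]
    [NormedAddCommGroup Y] [NormedSpace ℝ Y] (ε : ℝ) (f : X → Y) : Prop :=
  ∃ α γ : ℝ, 0 < α ∧ 0 < γ ∧
    ∃ T : Lf f →L[ℝ] X, ‖T‖ ≤ α ∧ ∀ x : X, ‖T ⟨f x, mem_Lf f x⟩ - x‖ ≤ γ * ε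

/-- The pair `(X, Y)` is *stable* if every standard ε-isometry `f : X → Y` (ε > 0) is stable. -/
def PairStable (X Y : Type*) [NormedAddCommGroup X] [NormedSpace ℝ X]
    [NormedAddCommGroup Y] [NormedSpace ℝ Y] : Prop :=
  ∀ ε : ℝ, 0 < ε → ∀ f : X → Y, StdEpsIsom ε f → IsStable ε f

namespace CDZ

open Filter Topology


variable {X : Type*} [NormedAddCommGroup X] [NormedSpace ℝ X]

/-- Difference quotient of the norm at `z` in direction `w`. -/
def slopeQ (z w : X) (t : ℝ) : ℝ := (‖z + t • w‖ - ‖z‖) / t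

/-- One-sided derivative of the norm at `z` in direction `w`. -/
def pder (z w : X) : ℝ := sInf (slopeQ z w '' Set.Ioi 0)

lemma slopeQ_ge (z w : X) {t : ℝ} (ht : 0 < t) : -‖w‖ ≤ slopeQ z w t := by
  rw [slopeQ, le_div_iff₀ ht]
  have h1 : ‖z‖ ≤ ‖z + t • w‖ + ‖t • w‖ := by
    nth_rewrite 1 [show z = z + t • w + -(t • w) by abel]
    exact (norm_add_le _ _).trans (by rw [norm_neg])
  have h2 : ‖t • w‖ = t * ‖w‖ := by
    rw [norm_smul, Real.norm_eq_abs, abs_of_pos ht]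
  nlinarith

lemma slopeQ_le (z w : X) {t : ℝ} (ht : 0 < t) : slopeQ z w t ≤ ‖w‖ := by
  rw [slopeQ, div_le_iff₀ ht]
  have h1 : ‖z + t • w‖ ≤ ‖z‖ + ‖t • w‖ := norm_add_le _ _
  have h2 : ‖t • w‖ = t * ‖w‖ := by
    rw [norm_smul, Real.norm_eq_abs, abs_of_pos ht]
  nlinarith

lemma slopeQ_bddBelow (z w : X) : BddBelow (slopeQ z w '' Set.Ioi 0) := by
  refine ⟨-‖w‖, ?_⟩
  rintro _ ⟨t, ht, rfl⟩
  exact slopeQ_ge z w ht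

lemma slopeQ_img_nonempty (z w : X) : (slopeQ z w '' Set.Ioi 0).Nonempty :=
  ⟨_, ⟨1, by norm_num, rfl⟩⟩

lemma pder_le_slopeQ (z w : X) {t : ℝ} (ht : 0 < t) : pder z w ≤ slopeQ z w t :=
  csInf_le (slopeQ_bddBelow z w) ⟨t, ht, rfl⟩

lemma neg_norm_le_pder (z w : X) : -‖w‖ ≤ pder z w := by
  refine le_csInf (slopeQ_img_nonempty z w) ?_
  rintro _ ⟨t, ht, rfl⟩
  exact slopeQ_ge z w ht

lemma pder_le_norm (z w : X) : pder z w ≤ ‖w‖ :=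
  (pder_le_slopeQ z w one_pos).trans (slopeQ_le z w one_pos)

lemma abs_pder_le (z w : X) : |pder z w| ≤ ‖w‖ :=
  abs_le.mpr ⟨neg_norm_le_pder z w, pder_le_norm z w⟩

lemma exists_slopeQ_lt (z w : X) {δ : ℝ} (hδ : 0 < δ) :
    ∃ t : ℝ, 0 < t ∧ slopeQ z w t < pder z w + δ := by
  have h : sInf (slopeQ z w '' Set.Ioi 0) < pder z w + δ := by
    rw [pder] at *; linarith
  obtain ⟨_, ⟨t, ht, rfl⟩, hlt⟩ := exists_lt_of_csInf_lt (slopeQ_img_nonempty z w) h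
  exact ⟨t, ht, hlt⟩

lemma slopeQ_mono (z w : X) {s t : ℝ} (hs : 0 < s) (hst : s ≤ t) :
    slopeQ z w s ≤ slopeQ z w t := by
  have ht : 0 < t := hs.trans_le hst
  have hzz : z + s • w = (1 - s / t) • z + (s / t) • (z + t • w) := by
    rw [smul_add, smul_smul]
    have hts : s / t * t = s := div_mul_cancel₀ s ht.ne'
    rw [hts, sub_smul, one_smul]
    abel
  have key : ‖z + s • w‖ ≤ (1 - s / t) * ‖z‖ + (s / t) * ‖z + t • w‖ := by
    rw [hzz]
    refine (norm_add_le _ _).trans ?_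
    have hst1 : 0 ≤ 1 - s / t := by
      have : s / t ≤ 1 := div_le_one_of_le₀ hst ht.le
      linarith
    have hst2 : (0:ℝ) ≤ s / t := (div_pos hs ht).le
    rw [norm_smul, norm_smul, Real.norm_eq_abs, Real.norm_eq_abs,
      abs_of_nonneg hst1, abs_of_nonneg hst2]
  rw [slopeQ, slopeQ, div_le_div_iff₀ hs ht]
  have e1 : (1 - s / t) * ‖z‖ * t = (t - s) * ‖z‖ := by field_simp <;> ring
  have e2 : (s / t) * ‖z + t • w‖ * t = s * ‖z + t • w‖ := by field_simp
  nlinarith [mul_le_mul_of_nonneg_right key ht.le]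

lemma slopeQ_add_le (z w₁ w₂ : X) {t : ℝ} (ht : 0 < t) :
    slopeQ z (w₁ + w₂) t ≤ slopeQ z w₁ (2 * t) + slopeQ z w₂ (2 * t) := by
  have hzz : z + t • (w₁ + w₂)
      = (1 / 2 : ℝ) • (z + (2 * t) • w₁) + (1 / 2 : ℝ) • (z + (2 * t) • w₂) := by
    module
  have key : ‖z + t • (w₁ + w₂)‖
      ≤ (1 / 2) * ‖z + (2 * t) • w₁‖ + (1 / 2) * ‖z + (2 * t) • w₂‖ := by
    rw [hzz]
    refine (norm_add_le _ _).trans ?_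
    rw [norm_smul, norm_smul]
    norm_num
  have h2t : (0:ℝ) < 2 * t := by linarith
  rw [slopeQ, slopeQ, slopeQ]
  have e : (‖z + (2*t) • w₁‖ - ‖z‖) / (2 * t) + (‖z + (2*t) • w₂‖ - ‖z‖) / (2 * t)
      = ((1/2) * ‖z + (2*t) • w₁‖ + (1/2) * ‖z + (2*t) • w₂‖ - ‖z‖) / t := by
    field_simp
    ring
  rw [e]
  exact (div_le_div_iff_of_pos_right ht).mpr (by linarith)

lemma pder_add_le (z w₁ w₂ : X) : pder z (w₁ + w₂) ≤ pder z w₁ + pder z w₂ := by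
  refine le_of_forall_pos_le_add fun δ hδ => ?_
  obtain ⟨t₁, ht₁, hs₁⟩ := exists_slopeQ_lt z w₁ (half_pos hδ)
  obtain ⟨t₂, ht₂, hs₂⟩ := exists_slopeQ_lt z w₂ (half_pos hδ)
  set t := min t₁ t₂ with htdef
  have ht : 0 < t := lt_min ht₁ ht₂
  have h := slopeQ_add_le z w₁ w₂ (half_pos ht)
  have e : 2 * (t / 2) = t := by ring
  rw [e] at h
  have m1 : slopeQ z w₁ t ≤ slopeQ z w₁ t₁ := slopeQ_mono z w₁ ht (min_le_left _ _)
  have m2 : slopeQ z w₂ t ≤ slopeQ z w₂ t₂ := slopeQ_mono z w₂ ht (min_le_right _ _)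
  have hp := pder_le_slopeQ z (w₁ + w₂) (half_pos ht)
  linarith

lemma pder_zero (z : X) : pder z (0 : X) = 0 := by
  have h1 : pder z (0:X) ≤ 0 := by
    have := pder_le_slopeQ z (0:X) one_pos
    simpa [slopeQ] using this
  have h2 : (0:ℝ) ≤ pder z (0:X) := by
    refine le_csInf (slopeQ_img_nonempty z 0) ?_
    rintro _ ⟨t, ht, rfl⟩
    simp [slopeQ]
  linarith

lemma pder_self (z : X) : pder z z = ‖z‖ := by
  have hs : ∀ t : ℝ, 0 < t → slopeQ z z t = ‖z‖ := by
    intro t ht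
    rw [slopeQ]
    have e : z + t • z = (1 + t) • z := by module
    rw [e, norm_smul, Real.norm_eq_abs, abs_of_pos (by linarith)]
    field_simp
    ring
  refine le_antisymm ?_ ?_
  · rw [← hs 1 one_pos]; exact pder_le_slopeQ z z one_pos
  · refine le_csInf (slopeQ_img_nonempty z z) ?_
    rintro _ ⟨t, ht, rfl⟩
    rw [hs t ht]

lemma slopeQ_smul (z w : X) {c t : ℝ} (hc : 0 < c) (ht : 0 < t) :
    slopeQ z (c • w) t = c * slopeQ z w (t * c) := by
  rw [slopeQ, slopeQ, smul_smul]
  field_simp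

lemma pder_smul_pos (z w : X) {c : ℝ} (hc : 0 < c) : pder z (c • w) = c * pder z w := by
  refine le_antisymm ?_ ?_
  · refine le_of_forall_pos_le_add fun δ hδ => ?_
    obtain ⟨t, ht, hs⟩ := exists_slopeQ_lt z w (div_pos hδ hc)
    have h1 : pder z (c • w) ≤ slopeQ z (c • w) (t / c) :=
      pder_le_slopeQ z _ (div_pos ht hc)
    rw [slopeQ_smul z w hc (div_pos ht hc)] at h1
    have e : t / c * c = t := div_mul_cancel₀ t hc.ne'
    rw [e] at h1
    have : c * slopeQ z w t ≤ c * (pder z w + δ / c) :=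
      mul_le_mul_of_nonneg_left hs.le hc.le
    have e2 : c * (pder z w + δ / c) = c * pder z w + δ := by field_simp <;> ring
    linarith
  · refine le_csInf (slopeQ_img_nonempty z _) ?_
    rintro _ ⟨t, ht, rfl⟩
    rw [slopeQ_smul z w hc ht]
    exact mul_le_mul_of_nonneg_left (pder_le_slopeQ z w (mul_pos ht hc)) hc.le

lemma pder_lipschitz (z w w' : X) : pder z w ≤ pder z w' + ‖w - w'‖ := by
  have h := pder_add_le z w' (w - w')
  rw [add_sub_cancel] at h
  exact h.trans (add_le_add_right (pder_le_norm z _) _)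

/-- `z` is a smooth point of the norm. -/
def SmoothPt (z : X) : Prop := ∀ w : X, pder z (-w) = - pder z w

lemma pder_pair_nonneg (z w : X) : 0 ≤ pder z w + pder z (-w) := by
  have h := pder_add_le z w (-w)
  rw [add_neg_cancel, pder_zero] at h
  linarith

lemma SmoothPt.additive {z : X} (hz : SmoothPt z) (w₁ w₂ : X) :
    pder z (w₁ + w₂) = pder z w₁ + pder z w₂ := by
  refine le_antisymm (pder_add_le z w₁ w₂) ?_
  have h := pder_add_le z (-w₁) (-w₂)
  rw [show -w₁ + -w₂ = -(w₁ + w₂) by abel] at h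
  rw [hz w₁, hz w₂, hz (w₁ + w₂)] at h
  linarith

/-- The Gâteaux derivative functional at a smooth point. -/
def smoothCLM (z : X) (hz : SmoothPt z) : X →L[ℝ] ℝ :=
  LinearMap.mkContinuous
    { toFun := pder z
      map_add' := hz.additive
      map_smul' := by
        intro c w
        simp only [RingHom.id_apply, smul_eq_mul]
        rcases lt_trichotomy c 0 with h | h | h
        · have e : c • w = -((-c) • w) := by module
          rw [e, hz _, pder_smul_pos z w (neg_pos.mpr h)]
          ring
        · simp [h, pder_zero]
        · exact pder_smul_pos z w h }
    1 (fun w => by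
      rw [one_mul]
      exact abs_pder_le z w)

@[simp] lemma smoothCLM_apply (z : X) (hz : SmoothPt z) (w : X) :
    smoothCLM z hz w = pder z w := rfl

lemma smoothCLM_norm_le (z : X) (hz : SmoothPt z) : ‖smoothCLM z hz‖ ≤ 1 :=
  LinearMap.mkContinuous_norm_le _ zero_le_one _

section Mazur

open TopologicalSpace

theorem dense_smoothPt [CompleteSpace X] [SeparableSpace X] :
    Dense {z : X | SmoothPt z} := by
  haveI : Nonempty X := ⟨0⟩
  obtain ⟨u, hu⟩ := TopologicalSpace.exists_dense_seq X
  set A : ℕ × ℕ → Set X := fun nm =>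
    {z | 1 / ((nm.2 : ℝ) + 1) ≤ pder z (u nm.1) + pder z (-(u nm.1))} with hA
  have hclosed : ∀ nm, IsClosed (A nm) := by
    intro nm
    have hset : A nm = ⋂ (t : Set.Ioi (0:ℝ)) (s : Set.Ioi (0:ℝ)),
        {z | 1 / ((nm.2 : ℝ) + 1) ≤ slopeQ z (u nm.1) t + slopeQ z (-(u nm.1)) s} := by
      ext z
      simp only [hA, Set.mem_iInter, Set.mem_setOf_eq]
      constructor
      · intro h t s
        exact h.trans (add_le_add (pder_le_slopeQ _ _ t.2) (pder_le_slopeQ _ _ s.2))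
      · intro h
        by_contra hlt
        push_neg at hlt
        have hδ : 0 < (1 / ((nm.2 : ℝ) + 1) - (pder z (u nm.1) + pder z (-(u nm.1)))) / 2 := by
          linarith
        obtain ⟨t, ht, hst⟩ := exists_slopeQ_lt z (u nm.1) hδ
        obtain ⟨s, hs, hss⟩ := exists_slopeQ_lt z (-(u nm.1)) hδ
        have := h ⟨t, ht⟩ ⟨s, hs⟩
        simp only at this
        linarith
    rw [hset]
    refine isClosed_iInter fun t => isClosed_iInter fun s => ?_
    refine isClosed_le continuous_const ?_
    have c1 : Continuous fun z : X => slopeQ z (u nm.1) t := by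
      unfold slopeQ
      exact ((continuous_id.add continuous_const).norm.sub continuous_norm).div_const _
    have c2 : Continuous fun z : X => slopeQ z (-(u nm.1)) s := by
      unfold slopeQ
      exact ((continuous_id.add continuous_const).norm.sub continuous_norm).div_const _
    exact c1.add c2
  have hint : ∀ nm, interior (A nm) = ∅ := by
    intro nm
    by_contra hne
    obtain ⟨z₀, hz₀⟩ := Set.nonempty_iff_ne_empty.mpr hne
    obtain ⟨r, hr, hball⟩ := Metric.isOpen_iff.mp isOpen_interior z₀ hz₀
    have hballA : Metric.ball z₀ r ⊆ A nm := hball.trans interior_subset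
    set w := u nm.1 with hw
    set c : ℝ := 1 / ((nm.2 : ℝ) + 1) with hc
    have hcpos : 0 < c := by positivity
    by_cases hw0 : w = 0
    · have hz₀A := hballA (Metric.mem_ball_self hr)
      simp only [hA, Set.mem_setOf_eq, ← hw, hw0] at hz₀A
      rw [neg_zero, pder_zero] at hz₀A
      rw [← hc] at hz₀A
      linarith
    · have hwn : 0 < ‖w‖ := norm_pos_iff.mpr hw0
      obtain ⟨N, hN⟩ := exists_nat_gt (2 * ‖w‖ / c)
      set h : ℝ := r / ((N + 1) * ‖w‖ + 1) with hh
      have hhpos : 0 < h := by positivity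
      set zi : ℕ → X := fun i => z₀ + ((i : ℝ) * h) • w with hzi
      have hmem : ∀ i : ℕ, i ≤ N → zi i ∈ A nm := by
        intro i hi
        apply hballA
        rw [Metric.mem_ball, dist_eq_norm]
        have e : zi i - z₀ = ((i : ℝ) * h) • w := by simp [hzi]
        rw [e, norm_smul, Real.norm_eq_abs, abs_of_nonneg (by positivity)]
        have hiN : (i : ℝ) ≤ N := by exact_mod_cast hi
        have key : (N : ℝ) * h * ‖w‖ < r := by
          have hden : (0:ℝ) < ((N:ℝ) + 1) * ‖w‖ + 1 := by positivity
          have e2 : (N:ℝ) * h * ‖w‖ = ((N:ℝ) * ‖w‖) * r / (((N:ℝ) + 1) * ‖w‖ + 1) := by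
            rw [hh]; ring
          rw [e2, div_lt_iff₀ hden]
          nlinarith
        have : (i : ℝ) * h * ‖w‖ ≤ (N : ℝ) * h * ‖w‖ := by
          apply mul_le_mul_of_nonneg_right _ hwn.le
          exact mul_le_mul_of_nonneg_right hiN hhpos.le
        linarith
      have key : ∀ i : ℕ, i ≤ N → (i : ℝ) * c + pder z₀ w ≤ pder (zi i) w := by
        intro i
        induction i with
        | zero => intro _; simp [hzi]
        | succ k ih =>
          intro hk
          have hk' : k ≤ N := Nat.le_of_succ_le hk
          have h1 : zi (k + 1) = zi k + h • w := by
            simp only [hzi]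
            push_cast
            rw [add_mul, one_mul, add_smul]
            abel
          have h2 : pder (zi (k + 1)) (-w) ≤ (‖zi k‖ - ‖zi (k + 1)‖) / h := by
            have hp := pder_le_slopeQ (zi (k + 1)) (-w) hhpos
            rw [slopeQ] at hp
            have e : zi (k + 1) + h • (-w) = zi k := by rw [h1]; module
            rwa [e] at hp
          have h3 : pder (zi k) w ≤ (‖zi (k + 1)‖ - ‖zi k‖) / h := by
            have hp := pder_le_slopeQ (zi k) w hhpos
            rw [slopeQ] at hp
            rwa [← h1] at hp
          have h4 := hmem (k + 1) hk
          simp only [hA, Set.mem_setOf_eq, ← hw, ← hc] at h4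
          have h5 := ih hk'
          have hneg : (‖zi k‖ - ‖zi (k + 1)‖) / h = -((‖zi (k + 1)‖ - ‖zi k‖) / h) := by
            ring
          push_cast
          linarith
      have hfin := key N le_rfl
      have hub := pder_le_norm (zi N) w
      have hlb := neg_norm_le_pder z₀ w
      rw [div_lt_iff₀ hcpos] at hN
      linarith
  have hdense : Dense (⋂ nm, (A nm)ᶜ) := by
    refine dense_iInter_of_isOpen (fun nm => (hclosed nm).isOpen_compl) ?_
    intro nm
    exact interior_eq_empty_iff_dense_compl.mp (hint nm)
  refine hdense.mono ?_
  intro z hz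
  simp only [Set.mem_iInter, Set.mem_compl_iff, hA, Set.mem_setOf_eq] at hz
  have hσu : ∀ n : ℕ, pder z (u n) + pder z (-(u n)) ≤ 0 := by
    intro n
    refine le_of_forall_pos_le_add fun δ hδ => ?_
    obtain ⟨m, hm⟩ := exists_nat_one_div_lt hδ
    have := hz (n, m)
    push_neg at this
    simp only at this
    linarith
  have hσ : ∀ v : X, pder z v + pder z (-v) ≤ 0 := by
    intro v
    refine le_of_forall_pos_le_add fun δ hδ => ?_
    obtain ⟨n, hn⟩ := hu.exists_dist_lt v (show 0 < δ / 4 by linarith)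
    have hd : ‖v - u n‖ < δ / 4 := by rwa [dist_eq_norm] at hn
    have l1 : pder z v ≤ pder z (u n) + ‖v - u n‖ := pder_lipschitz z v (u n)
    have l2 : pder z (-v) ≤ pder z (-(u n)) + ‖v - u n‖ := by
      have := pder_lipschitz z (-v) (-(u n))
      rwa [show -v - -(u n) = -(v - u n) by abel, norm_neg] at this
    have := hσu n
    linarith
  intro w
  have h1 := hσ w
  have h2 := pder_pair_nonneg z w
  linarith

end Mazur

section Cluster

variable {Y : Type*} [NormedAddCommGroup Y] [NormedSpace ℝ Y]

lemma cluster {ι : Type*} (l : Filter ι) [l.NeBot] (r : ℝ) (ψ : ι → Y →L[ℝ] ℝ)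
    (hψ : ∀ i, ‖ψ i‖ ≤ r) :
    ∃ φ : Y →L[ℝ] ℝ, ‖φ‖ ≤ r ∧
      ∀ (y : Y) (c : ℝ), (∀ᶠ i in l, ψ i y ≤ c) → φ y ≤ c := by
  set K : Set (WeakDual ℝ Y) := WeakDual.toStrongDual ⁻¹' Metric.closedBall 0 r with hK
  have hKc : IsCompact K := WeakDual.isCompact_closedBall (0 : StrongDual ℝ Y) r
  set χ : ι → WeakDual ℝ Y := fun i => StrongDual.toWeakDual (ψ i) with hχ
  have hmem : ∀ i, χ i ∈ K := by
    intro i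
    simp only [hK, Set.mem_preimage, Metric.mem_closedBall, dist_zero_right]
    exact hψ i
  set U : Ultrafilter ι := Ultrafilter.of l with hU
  have hUle : (U : Filter ι) ≤ l := Ultrafilter.of_le l
  have hKU : (U.map χ : Filter (WeakDual ℝ Y)) ≤ 𝓟 K := by
    rw [le_principal_iff]
    exact Filter.mem_map.mpr (Filter.univ_mem' hmem)
  obtain ⟨φw, hφK, hconv⟩ := hKc.ultrafilter_le_nhds (U.map χ) hKU
  refine ⟨WeakDual.toStrongDual φw, ?_, ?_⟩
  · simpa only [hK, Set.mem_preimage, Metric.mem_closedBall, dist_zero_right] using hφK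
  · intro y c hev
    have htend : Filter.Tendsto (fun i => χ i y) (U : Filter ι) (𝓝 (φw y)) :=
      ((WeakDual.eval_continuous y).tendsto φw).comp hconv
    exact le_of_tendsto htend (hev.filter_mono hUle)

end Cluster

-- part3
section Part3
open Filter

variable {X Y : Type*} [NormedAddCommGroup X] [NormedSpace ℝ X]
  [NormedAddCommGroup Y] [NormedSpace ℝ Y]

variable {ε : ℝ} {f : X → Y}

lemma dist_f_le (hf : StdEpsIsom ε f) (x y : X) : ‖f x - f y‖ ≤ ‖x - y‖ + ε := by
  have := hf.2 x y
  rw [abs_le] at this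
  linarith [this.2]

lemma dist_f_ge (hf : StdEpsIsom ε f) (x y : X) : ‖x - y‖ - ε ≤ ‖f x - f y‖ := by
  have := hf.2 x y
  rw [abs_le] at this
  linarith [this.1]

lemma norm_f_le (hf : StdEpsIsom ε f) (x : X) : ‖f x‖ ≤ ‖x‖ + ε := by
  have := dist_f_le hf x 0
  rw [hf.1] at this
  simpa using this

lemma phi_of_smooth (hε : 0 ≤ ε) (hf : StdEpsIsom ε f) {z : X} (hz : SmoothPt z)
    (hz0 : z ≠ 0) :
    ∃ φ : Y →L[ℝ] ℝ, ‖φ‖ ≤ 1 ∧ ∀ x : X, |φ (f x) - pder z x| ≤ 3 * ε := by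
  classical
  have hzn : 0 < ‖z‖ := norm_pos_iff.mpr hz0
  set d : ℕ → Y := fun n => f ((n : ℝ) • z) - f (-(n : ℝ) • z) with hd
  set ψ : ℕ → Y →L[ℝ] ℝ := fun n =>
    if h : d n ≠ 0 then (exists_dual_vector ℝ (d n) (norm_ne_zero_iff.mpr h)).choose else 0 with hψ
  have hψn : ∀ n, ‖ψ n‖ ≤ 1 := by
    intro n
    by_cases h : d n ≠ 0
    · simp only [hψ, dif_pos h]
      exact le_of_eq (exists_dual_vector ℝ (d n) (norm_ne_zero_iff.mpr h)).choose_spec.1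
    · simp only [hψ]
      rw [dif_neg h]
      simp
  have habs : ∀ n (y : Y), |ψ n y| ≤ ‖y‖ := by
    intro n y
    have h1 := (ψ n).le_opNorm y
    rw [Real.norm_eq_abs] at h1
    have h2 : ‖ψ n‖ * ‖y‖ ≤ 1 * ‖y‖ := mul_le_mul_of_nonneg_right (hψn n) (norm_nonneg y)
    rw [one_mul] at h2
    exact h1.trans h2
  -- the two-sided estimate for large n
  have hmain : ∀ (x : X) (n : ℕ), ε / (2 * ‖z‖) < (n : ℝ) →
      ψ n (f x) ≤ slopeQ z x (1 / n) + 3 * ε ∧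
      -(slopeQ z (-x) (1 / n)) - 3 * ε ≤ ψ n (f x) := by
    intro x n hn
    have hn0 : 0 < (n : ℝ) := lt_of_le_of_lt (by positivity) hn
    have hεn : ε < 2 * (n:ℝ) * ‖z‖ := by
      rw [div_lt_iff₀ (by positivity)] at hn
      nlinarith
    have hdiffn : ‖(n : ℝ) • z - (-(n : ℝ) • z)‖ = 2 * n * ‖z‖ := by
      rw [show (n:ℝ) • z - (-(n:ℝ) • z) = (2 * n : ℝ) • z by module,
        norm_smul, Real.norm_eq_abs, abs_of_pos (by positivity)]
    have hlow : 2 * (n:ℝ) * ‖z‖ - ε ≤ ‖d n‖ := by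
      have := dist_f_ge hf ((n : ℝ) • z) (-(n : ℝ) • z)
      rwa [hdiffn] at this
    have hd0 : d n ≠ 0 := by
      intro h0
      rw [h0, norm_zero] at hlow
      linarith
    have hspec := (exists_dual_vector ℝ (d n) (norm_ne_zero_iff.mpr hd0)).choose_spec
    have hψe : ψ n = (exists_dual_vector ℝ (d n) (norm_ne_zero_iff.mpr hd0)).choose := by
      simp only [hψ, dif_pos hd0]
    have hgdn : ψ n (d n) = ‖d n‖ := by
      rw [hψe]; exact_mod_cast hspec.2
    have hnz : ‖(n:ℝ) • z‖ = n * ‖z‖ := by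
      rw [norm_smul, Real.norm_eq_abs, abs_of_pos hn0]
    have ha : ‖f ((n:ℝ) • z)‖ ≤ n * ‖z‖ + ε := by
      have := norm_f_le hf ((n:ℝ) • z); rwa [hnz] at this
    have hb : ‖f (-(n:ℝ) • z)‖ ≤ n * ‖z‖ + ε := by
      have h0 := norm_f_le hf (-(n:ℝ) • z)
      have e : ‖(-(n:ℝ)) • z‖ = n * ‖z‖ := by
        rw [norm_smul, Real.norm_eq_abs, abs_neg, abs_of_pos hn0]
      rwa [e] at h0
    have hab : ψ n (f ((n:ℝ) • z)) - ψ n (f (-(n:ℝ) • z)) = ‖d n‖ := by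
      rw [← map_sub]; exact hgdn
    have hbval : ψ n (f (-(n:ℝ) • z)) ≤ -(n * ‖z‖) + 2 * ε := by
      have h1 : ψ n (f ((n:ℝ) • z)) ≤ n * ‖z‖ + ε :=
        (le_abs_self _).trans ((habs n _).trans ha)
      linarith
    have haval : n * ‖z‖ - 2 * ε ≤ ψ n (f ((n:ℝ) • z)) := by
      have h1 : -(n * ‖z‖ + ε) ≤ ψ n (f (-(n:ℝ) • z)) := by
        have := (neg_abs_le (ψ n (f (-(n:ℝ) • z))))
        have h2 := (habs n (f (-(n:ℝ) • z))).trans hb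
        linarith
      linarith
    have hs1 : ‖x + (n:ℝ) • z‖ - n * ‖z‖ = slopeQ z x (1 / n) := by
      rw [slopeQ]
      have e : z + (1 / (n:ℝ)) • x = ((n:ℝ))⁻¹ • ((n:ℝ) • z + x) := by
        rw [smul_add, smul_smul, inv_mul_cancel₀ hn0.ne', one_smul, one_div]
      rw [e, norm_smul, Real.norm_eq_abs, abs_of_pos (by positivity)]
      rw [show (n:ℝ) • z + x = x + (n:ℝ) • z by abel]
      field_simp <;> ring
    have hs2 : ‖(n:ℝ) • z - x‖ - n * ‖z‖ = slopeQ z (-x) (1 / n) := by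
      rw [slopeQ]
      have e : z + (1 / (n:ℝ)) • (-x) = ((n:ℝ))⁻¹ • ((n:ℝ) • z - x) := by
        rw [smul_sub, smul_smul, inv_mul_cancel₀ hn0.ne', one_div]
        module
      rw [e, norm_smul, Real.norm_eq_abs, abs_of_pos (by positivity)]
      field_simp <;> ring
    constructor
    · have h3 : ψ n (f x) - ψ n (f (-(n:ℝ) • z)) ≤ ‖x + (n:ℝ) • z‖ + ε := by
        have h4 : ψ n (f x) - ψ n (f (-(n:ℝ) • z)) ≤ ‖f x - f (-(n:ℝ) • z)‖ := by
          rw [← map_sub]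
          exact (le_abs_self _).trans (habs n _)
        have h5 := dist_f_le hf x (-(n:ℝ) • z)
        rw [show x - (-(n:ℝ) • z) = x + (n:ℝ) • z by module] at h5
        linarith
      linarith [hs1]
    · have h3 : ψ n (f ((n:ℝ) • z)) - ψ n (f x) ≤ ‖(n:ℝ) • z - x‖ + ε := by
        have h4 : ψ n (f ((n:ℝ) • z)) - ψ n (f x) ≤ ‖f ((n:ℝ) • z) - f x‖ := by
          rw [← map_sub]
          exact (le_abs_self _).trans (habs n _)
        have h5 := dist_f_le hf ((n:ℝ) • z) x
        linarith
      linarith [hs2]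
  obtain ⟨φ, hφn, hφ⟩ := cluster atTop 1 ψ hψn
  refine ⟨φ, hφn, ?_⟩
  have bound : ∀ v : X, φ (f v) ≤ pder z v + 3 * ε ∧ -(pder z (-v)) - 3 * ε ≤ φ (f v) := by
    -- we prove the upper bound for every v; the lower bound follows by applying
    -- the cluster bound to -(f v)
    have upper : ∀ v : X, φ (f v) ≤ pder z v + 3 * ε := by
      intro v
      have key : ∀ δ : ℝ, 0 < δ → φ (f v) ≤ pder z v + 3 * ε + δ := by
        intro δ hδ
        obtain ⟨t, ht, hst⟩ := exists_slopeQ_lt z v hδ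
        obtain ⟨n₀, hn₀⟩ := exists_nat_gt (max (1 / t) (ε / (2 * ‖z‖)))
        have hn₀t : (1:ℝ) / t < n₀ := lt_of_le_of_lt (le_max_left _ _) hn₀
        have hn₀0 : 0 < (n₀ : ℝ) := lt_trans (by positivity) hn₀t
        have h1n : (1:ℝ) / n₀ ≤ t := by
          rw [div_le_iff₀ hn₀0]
          rw [div_lt_iff₀ ht] at hn₀t
          linarith
        have hev : ∀ᶠ n in atTop, ψ n (f v) ≤ slopeQ z v ((1:ℝ) / n₀) + 3 * ε := by
          filter_upwards [eventually_ge_atTop n₀] with n hn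
          have hnn : (n₀:ℝ) ≤ (n:ℝ) := by exact_mod_cast hn
          have hεb : ε / (2 * ‖z‖) < (n:ℝ) :=
            lt_of_le_of_lt (le_max_right (1/t) _) (lt_of_lt_of_le hn₀ hnn)
          have hm := (hmain v n hεb).1
          have hnpos : (0:ℝ) < (n:ℝ) := lt_of_lt_of_le hn₀0 hnn
          have hmon : slopeQ z v ((1:ℝ)/n) ≤ slopeQ z v ((1:ℝ)/n₀) :=
            slopeQ_mono z v (one_div_pos.mpr hnpos) (one_div_le_one_div_of_le hn₀0 hnn)
          linarith
        have := hφ (f v) _ hev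
        have hmon2 : slopeQ z v ((1:ℝ)/n₀) ≤ slopeQ z v t :=
          slopeQ_mono z v (by positivity) h1n
        linarith
      refine le_of_forall_pos_le_add fun δ hδ => ?_
      have := key δ hδ
      linarith
    intro v
    refine ⟨upper v, ?_⟩
    -- lower bound via -(f v)
    have key : ∀ δ : ℝ, 0 < δ → -(φ (f v)) ≤ pder z (-v) + 3 * ε + δ := by
      intro δ hδ
      obtain ⟨t, ht, hst⟩ := exists_slopeQ_lt z (-v) hδ
      obtain ⟨n₀, hn₀⟩ := exists_nat_gt (max (1 / t) (ε / (2 * ‖z‖)))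
      have hn₀t : (1:ℝ) / t < n₀ := lt_of_le_of_lt (le_max_left _ _) hn₀
      have hn₀0 : 0 < (n₀ : ℝ) := lt_trans (by positivity) hn₀t
      have h1n : (1:ℝ) / n₀ ≤ t := by
        rw [div_le_iff₀ hn₀0]
        rw [div_lt_iff₀ ht] at hn₀t
        linarith
      have hev : ∀ᶠ n in atTop, ψ n (-(f v)) ≤ slopeQ z (-v) ((1:ℝ) / n₀) + 3 * ε := by
        filter_upwards [eventually_ge_atTop n₀] with n hn
        have hnn : (n₀:ℝ) ≤ (n:ℝ) := by exact_mod_cast hn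
        have hεb : ε / (2 * ‖z‖) < (n:ℝ) :=
          lt_of_le_of_lt (le_max_right (1/t) _) (lt_of_lt_of_le hn₀ hnn)
        have hm := (hmain v n hεb).2
        have hnpos : (0:ℝ) < (n:ℝ) := lt_of_lt_of_le hn₀0 hnn
        have hmon : slopeQ z (-v) ((1:ℝ)/n) ≤ slopeQ z (-v) ((1:ℝ)/n₀) :=
          slopeQ_mono z (-v) (one_div_pos.mpr hnpos) (one_div_le_one_div_of_le hn₀0 hnn)
        rw [map_neg]
        linarith
      have h2 := hφ (-(f v)) _ hev
      rw [map_neg] at h2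
      have hmon2 : slopeQ z (-v) ((1:ℝ)/n₀) ≤ slopeQ z (-v) t :=
        slopeQ_mono z (-v) (by positivity) h1n
      linarith
    have h3 : -(φ (f v)) ≤ pder z (-v) + 3 * ε := by
      refine le_of_forall_pos_le_add fun δ hδ => ?_
      have := key δ hδ
      linarith
    linarith
  intro x
  have h1 := (bound x).1
  have h2 := (bound x).2
  rw [hz x] at h2
  rw [abs_le]
  constructor <;> linarith

end Part3
section MainSep
open TopologicalSpace Filter

variable {X Y : Type*} [NormedAddCommGroup X] [NormedSpace ℝ X]
  [NormedAddCommGroup Y] [NormedSpace ℝ Y]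

lemma main_sep [CompleteSpace X] [SeparableSpace X]
    {ε : ℝ} {f : X → Y} (hε : 0 ≤ ε) (hf : StdEpsIsom ε f)
    (x' : X →L[ℝ] ℝ) (hx' : ‖x'‖ ≤ 1) (F : Finset X) {δ : ℝ} (hδ : 0 < δ) :
    ∃ φ : Y →L[ℝ] ℝ, ‖φ‖ ≤ 1 ∧ ∀ x ∈ F, |φ (f x) - x' x| ≤ 3 * ε + δ := by
  classical
  set P : Set ((X →L[ℝ] ℝ) × (Y →L[ℝ] ℝ)) :=
    {pr | ‖pr.1‖ ≤ 1 ∧ ‖pr.2‖ ≤ 1 ∧ ∀ x : X, |pr.2 (f x) - pr.1 x| ≤ 3 * ε} with hP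
  have hP0 : ((0 : X →L[ℝ] ℝ), (0 : Y →L[ℝ] ℝ)) ∈ P := by
    refine ⟨by simp, by simp, fun x => ?_⟩
    simp only [ContinuousLinearMap.zero_apply, sub_zero, abs_zero]
    linarith
  have hreach : ∀ v : X, v ≠ 0 → ∀ η : ℝ, 0 < η → ∃ pr ∈ P, ‖v‖ - η < pr.1 v := by
    intro v hv η hη
    have hd := dense_smoothPt (X := X)
    obtain ⟨z, hzmem, hzd⟩ := hd.exists_dist_lt v (lt_min (half_pos hη) (norm_pos_iff.mpr hv))
    have hzs : SmoothPt z := hzmem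
    have hdvz : ‖v - z‖ < min (η/2) ‖v‖ := by rwa [dist_eq_norm] at hzd
    have hz0 : z ≠ 0 := by
      intro h0
      rw [h0, sub_zero] at hdvz
      exact absurd (lt_of_lt_of_le hdvz (min_le_right _ _)) (lt_irrefl _)
    obtain ⟨φz, hφzn, hφz⟩ := phi_of_smooth hε hf hzs hz0
    refine ⟨(smoothCLM z hzs, φz), ⟨smoothCLM_norm_le z hzs, hφzn, fun x => hφz x⟩, ?_⟩
    have h1 : pder z z ≤ pder z v + ‖z - v‖ := pder_lipschitz z z v
    rw [pder_self] at h1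
    have h2 : ‖v‖ - ‖v - z‖ ≤ ‖z‖ := by
      have := norm_sub_norm_le v z
      linarith [abs_le.mp (abs_norm_sub_norm_le v z)]
    have h3 : ‖z - v‖ = ‖v - z‖ := by rw [← neg_sub, norm_neg]
    have h4 : ‖v - z‖ < η / 2 := lt_of_lt_of_le hdvz (min_le_left _ _)
    simp only [smoothCLM_apply]
    linarith
  -- evaluation into the finite-dimensional space
  set T : (X →L[ℝ] ℝ) → (↥F → ℝ) := fun g x => g x.1 with hT
  set K : Set (↥F → ℝ) := convexHull ℝ ((fun pr : (X →L[ℝ] ℝ) × (Y →L[ℝ] ℝ) => T pr.1) '' P)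
    with hK
  have hclos : T x' ∈ closure K := by
    by_contra hcl
    obtain ⟨cf, u, hKu, hup⟩ :=
      geometric_hahn_banach_closed_point (s := closure K)
        ((convex_convexHull ℝ _).closure) isClosed_closure hcl
    set v : X := ∑ x ∈ F.attach, (cf (Pi.single x (1:ℝ) : ↥F → ℝ)) • (x : X) with hv
    have key : ∀ g : X →L[ℝ] ℝ, cf (T g) = g v := by
      intro g
      have hTg : T g = ∑ x : ↥F, (g x.1) • (Pi.single x (1:ℝ) : ↥F → ℝ) := by
        funext j
        rw [Finset.sum_apply]
        simp only [Pi.smul_apply, smul_eq_mul]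
        rw [Finset.sum_eq_single j]
        · simp [hT]
        · intro b _ hbj
          simp [Pi.single_apply, hbj]
        · intro hj
          exact absurd (Finset.mem_univ j) hj
      rw [hTg, map_sum]
      simp only [map_smul, smul_eq_mul]
      rw [hv, map_sum]
      simp only [map_smul, smul_eq_mul]
      rw [← Finset.univ_eq_attach]
      exact Finset.sum_congr rfl fun x _ => mul_comm _ _
    have hKin : ∀ a ∈ P, cf (T a.1) < u := by
      intro a ha
      exact hKu _ (subset_closure (subset_convexHull ℝ _ ⟨a, ha, rfl⟩))
    have hcp : cf (T x') = x' v := key x'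
    by_cases hv0 : v = 0
    · have h1 := hKin _ hP0
      rw [key] at h1
      simp only [ContinuousLinearMap.zero_apply] at h1
      rw [hcp, hv0, map_zero] at hup
      linarith
    · have hη : 0 < x' v - u := by
        rw [hcp] at hup
        linarith
      obtain ⟨pr, hprP, hprv⟩ := hreach v hv0 _ hη
      have h1 := hKin pr hprP
      rw [key] at h1
      have h2 : x' v ≤ ‖v‖ := by
        have := x'.le_opNorm v
        rw [Real.norm_eq_abs] at this
        have h3 : ‖x'‖ * ‖v‖ ≤ 1 * ‖v‖ := mul_le_mul_of_nonneg_right hx' (norm_nonneg v)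
        rw [one_mul] at h3
        exact (le_abs_self _).trans (this.trans h3)
      linarith
  obtain ⟨k, hkK, hkd⟩ := Metric.mem_closure_iff.mp hclos δ hδ
  rw [hK, convexHull_eq] at hkK
  obtain ⟨ι, t, wts, zs, hw0, hw1, hzs, hcm⟩ := hkK
  have hsel : ∀ i ∈ t, ∃ pr, pr ∈ P ∧ T pr.1 = zs i := by
    intro i hi
    obtain ⟨pr, hprP, hpr⟩ := hzs i hi
    exact ⟨pr, hprP, hpr⟩
  choose prf hprfP hprfT using hsel
  set prt : ι → (X →L[ℝ] ℝ) × (Y →L[ℝ] ℝ) := fun i =>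
    if h : i ∈ t then prf i h else (0, 0) with hprt
  have hprtP : ∀ i ∈ t, prt i ∈ P ∧ T (prt i).1 = zs i := by
    intro i hi
    rw [hprt]
    simp only [dif_pos hi]
    exact ⟨hprfP i hi, hprfT i hi⟩
  set φ : Y →L[ℝ] ℝ := ∑ i ∈ t, wts i • (prt i).2 with hφ
  set ψS : X →L[ℝ] ℝ := ∑ i ∈ t, wts i • (prt i).1 with hψS
  refine ⟨φ, ?_, ?_⟩
  · refine ContinuousLinearMap.opNorm_le_bound φ zero_le_one fun y => ?_
    have hval : φ y = ∑ i ∈ t, wts i * (prt i).2 y := by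
      rw [hφ, ContinuousLinearMap.sum_apply]
      refine Finset.sum_congr rfl fun i hi => ?_
      simp
    rw [hval, Real.norm_eq_abs, one_mul]
    refine (Finset.abs_sum_le_sum_abs _ _).trans ?_
    have hb : ∀ i ∈ t, |wts i * (prt i).2 y| ≤ wts i * ‖y‖ := by
      intro i hi
      rw [abs_mul, abs_of_nonneg (hw0 i hi)]
      refine mul_le_mul_of_nonneg_left ?_ (hw0 i hi)
      have h6 := ((prt i).2).le_opNorm y
      rw [Real.norm_eq_abs] at h6
      have h5 := ((hprtP i hi).1).2.1
      nlinarith [norm_nonneg y]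
    refine (Finset.sum_le_sum hb).trans ?_
    rw [← Finset.sum_mul, hw1, one_mul]
  · intro x hxF
    -- |φ (f x) - ψS x| ≤ 3 ε
    have e1 : φ (f x) - ψS x = ∑ i ∈ t, wts i * ((prt i).2 (f x) - (prt i).1 x) := by
      rw [hφ, hψS, ContinuousLinearMap.sum_apply, ContinuousLinearMap.sum_apply,
        ← Finset.sum_sub_distrib]
      refine Finset.sum_congr rfl fun i hi => ?_
      simp only [ContinuousLinearMap.smul_apply, smul_eq_mul]
      ring
    have h1 : |φ (f x) - ψS x| ≤ 3 * ε := by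
      rw [e1]
      refine (Finset.abs_sum_le_sum_abs _ _).trans ?_
      have : ∀ i ∈ t, |wts i * ((prt i).2 (f x) - (prt i).1 x)| ≤ wts i * (3 * ε) := by
        intro i hi
        rw [abs_mul, abs_of_nonneg (hw0 i hi)]
        exact mul_le_mul_of_nonneg_left (((hprtP i hi).1).2.2 x) (hw0 i hi)
      refine (Finset.sum_le_sum this).trans ?_
      rw [← Finset.sum_mul, hw1, one_mul]
    -- ψS x = k ⟨x, hxF⟩
    have e2 : ψS x = k ⟨x, hxF⟩ := by
      rw [← hcm, Finset.centerMass_eq_of_sum_1 _ _ hw1]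
      rw [hψS, ContinuousLinearMap.sum_apply, Finset.sum_apply]
      refine Finset.sum_congr rfl fun i hi => ?_
      rw [← (hprtP i hi).2]
      simp only [ContinuousLinearMap.smul_apply, smul_eq_mul, Pi.smul_apply, hT]
    have h2 : |k ⟨x, hxF⟩ - x' x| ≤ δ := by
      have := dist_le_pi_dist (T x') k ⟨x, hxF⟩
      rw [Real.dist_eq] at this
      have h3 : dist (T x') k ≤ δ := le_of_lt hkd
      have h4 : |T x' ⟨x, hxF⟩ - k ⟨x, hxF⟩| ≤ δ := this.trans h3
      rw [abs_sub_comm] at h4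
      simpa [hT] using h4
    calc |φ (f x) - x' x|
        = |(φ (f x) - ψS x) + (k ⟨x, hxF⟩ - x' x)| := by rw [e2]; ring_nf
      _ ≤ |φ (f x) - ψS x| + |k ⟨x, hxF⟩ - x' x| := abs_add_le _ _
      _ ≤ 3 * ε + δ := add_le_add h1 h2

end MainSep

section Assembly
open TopologicalSpace Filter

variable {X Y : Type*} [NormedAddCommGroup X] [NormedSpace ℝ X] [CompleteSpace X]
  [NormedAddCommGroup Y] [NormedSpace ℝ Y]

lemma norm_one_case {ε : ℝ} {f : X → Y} (hε : 0 ≤ ε) (hf : StdEpsIsom ε f)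
    (x' : X →L[ℝ] ℝ) (hx : ‖x'‖ = 1) :
    ∃ φ : Y →L[ℝ] ℝ, ‖φ‖ = 1 ∧ ∀ x : X, |φ (f x) - x' x| ≤ 3 * ε := by
  classical
  have hv : ∀ j : ℕ, ∃ v : X, ‖v‖ ≤ 1 ∧ 1 - 1/((j:ℝ)+1) < x' v := by
    intro j
    by_contra hcon
    push_neg at hcon
    have hjp : (0:ℝ) < 1/((j:ℝ)+1) := by positivity
    have hb : ∀ w : X, |x' w| ≤ (1 - 1/((j:ℝ)+1)) * ‖w‖ := by
      intro w
      by_cases hw0 : w = 0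
      · simp [hw0]
      · have hwn : 0 < ‖w‖ := norm_pos_iff.mpr hw0
        have hnu : ‖‖w‖⁻¹ • w‖ ≤ 1 := by
          rw [norm_smul, Real.norm_eq_abs, abs_of_pos (by positivity),
            inv_mul_cancel₀ hwn.ne']
        have h1 := hcon (‖w‖⁻¹ • w) hnu
        have h2 := hcon (-(‖w‖⁻¹ • w)) (by rwa [norm_neg])
        rw [map_smul, smul_eq_mul] at h1
        rw [map_neg, map_smul, smul_eq_mul] at h2
        rw [abs_le]
        constructor
        · have : -(1 - 1/((j:ℝ)+1)) ≤ ‖w‖⁻¹ * x' w := by linarith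
          have h3 := mul_le_mul_of_nonneg_left this hwn.le
          rw [← mul_assoc, mul_inv_cancel₀ hwn.ne', one_mul] at h3
          nlinarith
        · have h3 := mul_le_mul_of_nonneg_left h1 hwn.le
          rw [← mul_assoc, mul_inv_cancel₀ hwn.ne', one_mul] at h3
          nlinarith
    have hle : ‖x'‖ ≤ 1 - 1/((j:ℝ)+1) := by
      have hj1 : 1/((j:ℝ)+1) ≤ 1 := by
        rw [div_le_one (by positivity)]
        linarith [Nat.cast_nonneg (α := ℝ) j]
      refine ContinuousLinearMap.opNorm_le_bound x' (by linarith) fun w => ?_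
      rw [Real.norm_eq_abs]
      exact hb w
    rw [hx] at hle
    linarith
  choose v hvn hvx using hv
  have hstep : ∀ FK : Finset X × ℕ, ∃ φ : Y →L[ℝ] ℝ, ‖φ‖ ≤ 1 ∧
      ∀ x ∈ FK.1, |φ (f x) - x' x| ≤ 3 * ε + 1/((FK.2:ℝ)+1) := by
    rintro ⟨F, k⟩
    set S : Set X := ↑F ∪ Set.range v with hS
    have hScount : S.Countable := F.countable_toSet.union (Set.countable_range v)
    set X₀ : Submodule ℝ X := (Submodule.span ℝ S).topologicalClosure with hX₀
    have hX₀closed : IsClosed (X₀ : Set X) := Submodule.isClosed_topologicalClosure _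
    haveI : CompleteSpace X₀ := hX₀closed.completeSpace_coe
    haveI : SeparableSpace X₀ := by
      have h1 : TopologicalSpace.IsSeparable (X₀ : Set X) := by
        rw [hX₀, Submodule.topologicalClosure_coe]
        exact hScount.isSeparable.span.closure
      exact h1.separableSpace
    set f₀ : X₀ → Y := fun w => f ↑w with hf₀
    have hf₀e : StdEpsIsom ε f₀ := by
      constructor
      · show f ((0 : X₀) : X) = 0
        rw [ZeroMemClass.coe_zero, hf.1]
      · intro a b
        exact hf.2 (a : X) (b : X)
    set x'₀ : X₀ →L[ℝ] ℝ := x'.comp X₀.subtypeL with hx'₀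
    have hx'₀n : ‖x'₀‖ ≤ 1 := by
      refine ContinuousLinearMap.opNorm_le_bound _ zero_le_one fun w => ?_
      rw [one_mul]
      have h1 := x'.le_opNorm (w : X)
      rw [hx, one_mul] at h1
      exact h1
    have hmemF : ∀ x ∈ F, x ∈ X₀ := fun x hxm =>
      Submodule.le_topologicalClosure _ (Submodule.subset_span (Or.inl hxm))
    set F₀ : Finset X₀ := F.attach.map
      ⟨fun x => ⟨x.1, hmemF x.1 x.2⟩,
        fun a b hab => by
          have h := congrArg Subtype.val hab
          exact Subtype.ext h⟩ with hF₀
    obtain ⟨φ, hφn, hφ⟩ :=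
      main_sep hε hf₀e x'₀ hx'₀n F₀ (show (0:ℝ) < 1/((k:ℝ)+1) by positivity)
    refine ⟨φ, hφn, fun x hxF => ?_⟩
    have hx0 : (⟨x, hmemF x hxF⟩ : X₀) ∈ F₀ := by
      rw [hF₀]
      simp only [Finset.mem_map, Finset.mem_attach, Function.Embedding.coeFn_mk]
      exact ⟨⟨x, hxF⟩, trivial, rfl⟩
    exact hφ _ hx0
  choose Φ hΦn hΦ using hstep
  obtain ⟨φ, hφn, hφb⟩ := cluster (atTop : Filter (Finset X × ℕ)) 1 Φ hΦn
  have hbound : ∀ x : X, |φ (f x) - x' x| ≤ 3 * ε := by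
    intro x
    have hup : ∀ m : ℕ, φ (f x) ≤ x' x + 3*ε + 1/((m:ℝ)+1) := by
      intro m
      refine hφb (f x) _ ?_
      refine eventually_atTop.mpr ⟨({x}, m), fun FK hFK => ?_⟩
      have hsub : ({x} : Finset X) ⊆ FK.1 := hFK.1
      have hx1 : x ∈ FK.1 := hsub (Finset.mem_singleton_self x)
      have hk : m ≤ FK.2 := hFK.2
      have h1 := hΦ FK x hx1
      rw [abs_le] at h1
      have hmono : 1/((FK.2:ℝ)+1) ≤ 1/((m:ℝ)+1) := by
        apply one_div_le_one_div_of_le (by positivity)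
        have : (m:ℝ) ≤ FK.2 := by exact_mod_cast hk
        linarith
      linarith [h1.2]
    have hdn : ∀ m : ℕ, x' x - 3*ε - 1/((m:ℝ)+1) ≤ φ (f x) := by
      intro m
      have h2 : φ (-(f x)) ≤ -(x' x) + 3*ε + 1/((m:ℝ)+1) := by
        refine hφb (-(f x)) _ ?_
        refine eventually_atTop.mpr ⟨({x}, m), fun FK hFK => ?_⟩
        have hsub : ({x} : Finset X) ⊆ FK.1 := hFK.1
        have hx1 : x ∈ FK.1 := hsub (Finset.mem_singleton_self x)
        have hk : m ≤ FK.2 := hFK.2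
        have h1 := hΦ FK x hx1
        rw [abs_le] at h1
        have hmono : 1/((FK.2:ℝ)+1) ≤ 1/((m:ℝ)+1) := by
          apply one_div_le_one_div_of_le (by positivity)
          have : (m:ℝ) ≤ FK.2 := by exact_mod_cast hk
          linarith
        rw [map_neg]
        linarith [h1.1]
      rw [map_neg] at h2
      linarith
    have h1 : φ (f x) ≤ x' x + 3*ε := by
      refine le_of_forall_pos_le_add fun δ hδ => ?_
      obtain ⟨m, hm⟩ := exists_nat_one_div_lt hδ
      linarith [hup m]
    have h2 : x' x - 3*ε ≤ φ (f x) := by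
      by_contra hcon
      push_neg at hcon
      obtain ⟨m, hm⟩ :=
        exists_nat_one_div_lt (show (0:ℝ) < (x' x - 3*ε - φ (f x)) by linarith)
      linarith [hdn m]
    rw [abs_le]
    exact ⟨by linarith, by linarith⟩
  have hφ1 : ‖φ‖ = 1 := by
    refine le_antisymm hφn ?_
    by_contra hlt
    push_neg at hlt
    set θ : ℝ := 1 - ‖φ‖ with hθ
    have hθ0 : 0 < θ := by linarith
    have hθ1 : θ ≤ 1 := by
      have := norm_nonneg φ
      linarith
    obtain ⟨j, hj⟩ := exists_nat_one_div_lt (show (0:ℝ) < θ/2 by linarith)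
    obtain ⟨n, hn⟩ := exists_nat_gt ((8*ε + 2)/θ)
    set x := (n:ℝ) • v j with hxx
    have hb1 := hbound x
    rw [abs_le] at hb1
    have hnx : ‖x‖ ≤ (n:ℝ) := by
      rw [hxx, norm_smul, Real.norm_eq_abs, abs_of_nonneg (by positivity)]
      nlinarith [hvn j, Nat.cast_nonneg (α := ℝ) n]
    have hfx : ‖f x‖ ≤ (n:ℝ) + ε := by
      have := norm_f_le hf x
      linarith
    have hxv : x' x = n * x' (v j) := by rw [hxx, map_smul, smul_eq_mul]
    have hφfx : φ (f x) ≤ ‖φ‖ * ((n:ℝ) + ε) := by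
      have h3 := φ.le_opNorm (f x)
      rw [Real.norm_eq_abs] at h3
      have h4 : ‖φ‖ * ‖f x‖ ≤ ‖φ‖ * ((n:ℝ) + ε) :=
        mul_le_mul_of_nonneg_left hfx (norm_nonneg φ)
      linarith [le_abs_self (φ (f x))]
    have hvj := hvx j
    have hnθ : (8*ε + 2)/θ * θ < (n:ℝ) * θ := by
      exact mul_lt_mul_of_pos_right hn hθ0
    rw [div_mul_cancel₀ _ hθ0.ne'] at hnθ
    have hnn : (0:ℝ) ≤ (n:ℝ) := Nat.cast_nonneg n
    -- φ (f x) ≥ x' x - 3 ε ≥ n (1 - θ/2) - 3 ε and φ (f x) ≤ (1-θ)(n+ε)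
    have hlow : (n:ℝ) * (1 - θ/2) - 3*ε ≤ φ (f x) := by
      have h5 : (n:ℝ) * (1 - θ/2) ≤ n * x' (v j) := by
        have : 1 - θ/2 ≤ x' (v j) := by linarith
        exact mul_le_mul_of_nonneg_left this hnn
      linarith [hb1.1, hxv.symm.le, hxv.le]
    have hup2 : φ (f x) ≤ (1 - θ) * ((n:ℝ) + ε) := by
      have e : ‖φ‖ = 1 - θ := by rw [hθ]; ring
      rwa [e] at hφfx
    nlinarith
  exact ⟨φ, hφ1, hbound⟩

end Assembly

end CDZ

/-- Cheng–Dong–Zhang: for a standard ε-isometry `f : X → Y` and any `x* ∈ X*` there is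
`φ ∈ Y*` with `‖φ‖ = ‖x*‖` and `|⟨φ, f x⟩ - ⟨x*, x⟩| ≤ 4 ε ‖x*‖` for all `x`. -/
theorem stmt0 {X Y : Type*} [NormedAddCommGroup X] [NormedSpace ℝ X] [CompleteSpace X]
    [NormedAddCommGroup Y] [NormedSpace ℝ Y] [CompleteSpace Y]
    (ε : ℝ) (hε : 0 ≤ ε) (f : X → Y) (hf : StdEpsIsom ε f) (x' : X →L[ℝ] ℝ) :
    ∃ φ : Y →L[ℝ] ℝ, ‖φ‖ = ‖x'‖ ∧ ∀ x : X, |φ (f x) - x' x| ≤ 4 * ε * ‖x'‖ := by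
  by_cases h0 : x' = 0
  · refine ⟨0, by simp [h0], fun x => ?_⟩
    simp [h0]
  · have hr : 0 < ‖x'‖ := norm_pos_iff.mpr h0
    set x₁ : X →L[ℝ] ℝ := ‖x'‖⁻¹ • x' with hx₁
    have hx₁n : ‖x₁‖ = 1 := by
      have hns := norm_smul (‖x'‖⁻¹) x'
      rw [hx₁, hns, Real.norm_eq_abs, abs_of_pos (inv_pos.mpr hr),
        inv_mul_cancel₀ hr.ne']
    obtain ⟨φ₁, hφ₁n, hφ₁⟩ := CDZ.norm_one_case hε hf x₁ hx₁n
    refine ⟨‖x'‖ • φ₁, ?_, ?_⟩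
    · have hns := norm_smul (‖x'‖) φ₁
      rw [hns, Real.norm_eq_abs, abs_of_pos hr, hφ₁n, mul_one]
    · intro x
      have h1 := hφ₁ x
      have e : (‖x'‖ • φ₁) (f x) - x' x = ‖x'‖ * (φ₁ (f x) - x₁ x) := by
        rw [ContinuousLinearMap.smul_apply, smul_eq_mul, hx₁,
          ContinuousLinearMap.smul_apply, smul_eq_mul]
        field_simp <;> ring
      rw [e, abs_mul, abs_of_pos hr]
      have h2 : ‖x'‖ * |φ₁ (f x) - x₁ x| ≤ ‖x'‖ * (3 * ε) :=
        mul_le_mul_of_nonneg_left h1 hr.le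
      nlinarith
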